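/- Let A be an M×N real centrosymmetric matrix (w_{i,j} = w_{M−i+1,N−j+1}, M and N even) and let B = AᵀA. Then the half-size difference and sum matrices of B satisfy B¹ = (A¹)ᵀ A¹ and B² = (A²)ᵀ A², where for any centrosymmetric matrix C of size m×n one defines C¹_{i,j} = c_{i,j} − c_{m−i+1,j} and C²_{i,j} = c_{i,j} + c_{m−i+1,j} for 1 ≤ i ≤ m/2, 1 ≤ j ≤ n/2. -/

import Mathlib

open Matrix

/-- Embedding of `Fin k` into the first half of `Fin (2*k)`. -/
def emb {k : ℕ} : Fin k → Fin (2 * k) := Fin.castLE (by omega)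

/-- The half-size difference (`s = -1`) and sum (`s = 1`) matrices of a matrix `C`
with both dimensions even: `C¹_{i,j} = c_{i,j} - c_{m-i+1,j}`, `C²_{i,j} = c_{i,j} + c_{m-i+1,j}`. -/
def halfMat {m n : ℕ} (s : ℝ) (C : Matrix (Fin (2 * m)) (Fin (2 * n)) ℝ) :
    Matrix (Fin m) (Fin n) ℝ :=
  fun i j => C (emb i) (emb j) + s * C (emb i).rev (emb j)

/-- `Fin m ⊕ Fin m ≃ Fin (2*m)`, first summand to the first half, second summand
reversed into the second half. -/
def halfEquiv (m : ℕ) : Fin m ⊕ Fin m ≃ Fin (2 * m) where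
  toFun := Sum.elim (fun i => emb i) (fun i => (emb i).rev)
  invFun x := if h : (x : ℕ) < m then .inl ⟨x, h⟩ else .inr ⟨2 * m - 1 - x, by omega⟩
  left_inv x := by
    rcases x with i | i
    · simp [emb, i.isLt]
    · have hi := i.isLt
      have : ¬ ((Fin.rev (emb i) : ℕ) < m) := by
        simp [Fin.val_rev, emb]; omega
      simp only [Sum.elim_inr, this, dif_neg, not_false_iff]
      refine (dif_neg this).trans ?_
      congr 1
      ext
      simp [Fin.val_rev, emb]; omega
  right_inv x := by
    have hx := x.isLt
    by_cases h : (x : ℕ) < m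
    · simp [h, emb]
    · simp only [h, dif_neg, not_false_iff, Sum.elim_inr]
      ext
      simp [Fin.val_rev, emb]; omega

lemma sum_split {m : ℕ} (f : Fin (2 * m) → ℝ) :
    ∑ x, f x = (∑ i : Fin m, f (emb i)) + ∑ i : Fin m, f (emb i).rev := by
  rw [← Equiv.sum_comp (halfEquiv m) f, Fintype.sum_sum_type]
  rfl

lemma key {m n : ℕ} (s : ℝ) (hs : s * s = 1)
    (A : Matrix (Fin (2 * m)) (Fin (2 * n)) ℝ)
    (hA : ∀ i j, A i j = A i.rev j.rev) :
    halfMat s (Aᵀ * A) = (halfMat s A)ᵀ * halfMat s A := by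
  ext j k
  have hrev : ∀ (x : Fin (2 * m)) (y : Fin (2 * n)), A x y.rev = A x.rev y := by
    intro x y
    conv_lhs => rw [hA]
    rw [Fin.rev_rev]
  simp only [halfMat, mul_apply, transpose_apply]
  simp only [hrev]
  rw [sum_split (fun x => A x (emb j) * A x (emb k)),
      sum_split (fun x => A x.rev (emb j) * A x (emb k))]
  simp only [Fin.rev_rev]
  rw [mul_add, Finset.mul_sum, Finset.mul_sum, ← Finset.sum_add_distrib,
      ← Finset.sum_add_distrib, ← Finset.sum_add_distrib]
  apply Finset.sum_congr rfl
  intro i _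
  linear_combination (-(A (emb i).rev (emb j) * A (emb i).rev (emb k))) * hs

/-- For a centrosymmetric `A`, the half-size matrices of `B = Aᵀ A` satisfy
`B¹ = (A¹)ᵀ A¹` and `B² = (A²)ᵀ A²`. -/
theorem stmt8 (m n : ℕ) (hm : 0 < m) (hn : 0 < n)
    (A : Matrix (Fin (2 * m)) (Fin (2 * n)) ℝ)
    (hA : ∀ i j, A i j = A i.rev j.rev) :
    halfMat (-1) (Aᵀ * A) = (halfMat (-1) A)ᵀ * halfMat (-1) A ∧
    halfMat 1 (Aᵀ * A) = (halfMat 1 A)ᵀ * halfMat 1 A := by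
  exact ⟨key (-1) (by norm_num) A hA, key 1 (by norm_num) A hA⟩
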